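/- Let M be a λ-term, G a graph model, and suppose α ∈ M^G_ρ for some environment ρ. Then there exists a finite subpair A of G such that α ∈ M^A_{ρ∩A}, where (ρ∩A)(x) = ρ(x) ∩ A. -/
import Mathlib


/-- Untyped λ-terms in de Bruijn notation. -/
inductive Term : Type
  | var : ℕ → Term
  | app : Term → Term → Term
  | lam : Term → Term
  deriving DecidableEq

namespace Term

/-- Lifting (shifting) of de Bruijn indices at cutoff `d`. -/
def lift (d : ℕ) : Term → Term
  | var n => if n < d then var n else var (n + 1)
  | app M N => app (lift d M) (lift d N)
  | lam M => lam (lift (d + 1) M)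

/-- Capture-avoiding substitution of `s` for index `k`. -/
def subst : Term → ℕ → Term → Term
  | var n, k, s => if n = k then s else if k < n then var (n - 1) else var n
  | app M N, k, s => app (subst M k s) (subst N k s)
  | lam M, k, s => lam (subst M (k + 1) (lift 0 s))

/-- One-step β-reduction (compatible closure of the β-rule). -/
inductive Step : Term → Term → Prop
  | beta (M N : Term) : Step (app (lam M) N) (subst M 0 N)
  | appL {M M' : Term} (N : Term) : Step M M' → Step (app M N) (app M' N)
  | appR (M : Term) {N N' : Term} : Step N N' → Step (app M N) (app M N')
  | xi {M M' : Term} : Step M M' → Step (lam M) (lam M')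

/-- β-conversion: the equivalence relation generated by one-step β-reduction. -/
def BetaConv : Term → Term → Prop := Relation.EqvGen Step

/-- An effective bijective numeration of λ-terms. -/
def encodeT : Term → ℕ
  | var n => 3 * n
  | app M N => 3 * Nat.pair (encodeT M) (encodeT N) + 1
  | lam M => 3 * encodeT M + 2

/-- `ClosedUnder k M`: all free de Bruijn indices of `M` are `< k`. -/
def ClosedUnder : ℕ → Term → Prop
  | k, var n => n < k
  | k, app M N => ClosedUnder k M ∧ ClosedUnder k N
  | k, lam M => ClosedUnder (k + 1) M

/-- Closed λ-terms. -/
def Closed (M : Term) : Prop := ClosedUnder 0 M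

end Term

/-- A set of λ-terms is recursively enumerable (w.r.t. the fixed effective
numeration `encodeT`) if membership is the domain of a partial recursive function. -/
def TermRE (X : Set Term) : Prop :=
  ∃ f : ℕ →. ℕ, Nat.Partrec f ∧ ∀ M : Term, M ∈ X ↔ (f (Term.encodeT M)).Dom

/-- A set of λ-terms closed under β-conversion. -/
def BetaClosed (X : Set Term) : Prop :=
  ∀ M N : Term, M ∈ X → Term.BetaConv M N → N ∈ X

/-- Extend an environment by pushing a new value for de Bruijn index `0`. -/
def consEnv {G : Type*} (d : Set G) (ρ : ℕ → Set G) : ℕ → Set G :=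
  fun k => match k with
  | 0 => d
  | k + 1 => ρ k

/-- Interpretation of λ-terms in a graph model `(G, c)`, where `c : G* × G → G`
is the (injective, total) code map and environments send variables to subsets of `G`. -/
def ginterp {G : Type*} (c : Finset G × G → G) : Term → (ℕ → Set G) → Set G
  | Term.var n, ρ => ρ n
  | Term.app M N, ρ =>
      {α | ∃ a : Finset G, ↑a ⊆ ginterp c N ρ ∧ c (a, α) ∈ ginterp c M ρ}
  | Term.lam M, ρ =>
      {β | ∃ (a : Finset G) (α : G), β = c (a, α) ∧ α ∈ ginterp c M (consEnv ↑a ρ)}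

/-- The λ-term `δ = λx.xx`. -/
def deltaTerm : Term := Term.lam (Term.app (Term.var 0) (Term.var 0))

/-- The λ-term `Ω = (λx.xx)(λx.xx)`. -/
def omegaTerm : Term := Term.app deltaTerm deltaTerm

/-- A partial pair on an ambient set of "web elements" `G`: a carrier set `A ⊆ G`
together with a partial code map `c_A : A* × A ⇀ A` (represented by `Option`). -/
structure PartialPair (G : Type*) where
  carrier : Set G
  code : Finset G × G → Option G

namespace PartialPair

/-- Well-formedness of a partial pair: the domain and values of the partial code
map lie in the carrier, and the code map is injective (where defined). -/
def Good {G : Type*} (P : PartialPair G) : Prop :=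
  (∀ (a : Finset G) (α γ : G), P.code (a, α) = some γ →
      ↑a ⊆ P.carrier ∧ α ∈ P.carrier ∧ γ ∈ P.carrier) ∧
  (∀ (p q : Finset G × G) (γ : G), P.code p = some γ → P.code q = some γ → p = q)

/-- `P.Sub Q`: `P` is a subpair of `Q` (`P ≤ Q`): the carrier of `P` is contained in
that of `Q` and the code map of `Q` extends that of `P`. -/
def Sub {G : Type*} (P Q : PartialPair G) : Prop :=
  P.carrier ⊆ Q.carrier ∧
  ∀ (p : Finset G × G) (γ : G), P.code p = some γ → Q.code p = some γ

/-- Interpretation of λ-terms in a partial pair, using only the defined part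
of the partial code map. -/
def interp {G : Type*} (P : PartialPair G) : Term → (ℕ → Set G) → Set G
  | Term.var n, ρ => ρ n
  | Term.app M N, ρ =>
      {α | α ∈ P.carrier ∧ ∃ a : Finset G, ↑a ⊆ interp P N ρ ∧
        ∃ γ : G, P.code (a, α) = some γ ∧ γ ∈ interp P M ρ}
  | Term.lam M, ρ =>
      {β | ∃ (a : Finset G) (α : G), P.code (a, α) = some β ∧
        α ∈ interp P M (consEnv ↑a ρ)}

end PartialPair

/-- The total pair associated to a graph model `(G, c)` (carrier is all of `G`). -/
def fullPair {G : Type*} (c : Finset G × G → G) : PartialPair G :=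
  ⟨Set.univ, fun p => some (c p)⟩

/-- The bottom environment, mapping every variable to `∅`. -/
def botEnv {G : Type*} : ℕ → Set G := fun _ => ∅


section Aux

variable {G : Type*}

lemma interp_mono {P Q : PartialPair G} (h : P.Sub Q) :
    ∀ (M : Term) {ρ₁ ρ₂ : ℕ → Set G}, (∀ n, ρ₁ n ⊆ ρ₂ n) →
      P.interp M ρ₁ ⊆ Q.interp M ρ₂ := by
  intro M
  induction M with
  | var n => intro ρ₁ ρ₂ hρ α hα; exact hρ n hα
  | app M N ihM ihN =>
    intro ρ₁ ρ₂ hρ α hα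
    obtain ⟨hαc, a, haN, γ, hcode, hγ⟩ := hα
    exact ⟨h.1 hαc, a, fun x hx => ihN hρ (haN hx), γ, h.2 _ _ hcode, ihM hρ hγ⟩
  | lam M ihM =>
    intro ρ₁ ρ₂ hρ β hβ
    obtain ⟨a, α, hcode, hα⟩ := hβ
    refine ⟨a, α, h.2 _ _ hcode, ihM ?_ hα⟩
    intro n
    cases n with
    | zero => exact fun x hx => hx
    | succ k => exact hρ k

lemma sub_trans {P Q R : PartialPair G} (h1 : P.Sub Q) (h2 : Q.Sub R) : P.Sub R :=
  ⟨h1.1.trans h2.1, fun p γ h => h2.2 p γ (h1.2 p γ h)⟩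

def unionPair (P Q : PartialPair G) : PartialPair G :=
  ⟨P.carrier ∪ Q.carrier, fun p =>
    match P.code p with
    | some γ => some γ
    | none => Q.code p⟩

lemma unionPair_code_eq (P Q : PartialPair G) (p : Finset G × G) :
    (unionPair P Q).code p =
      (match P.code p with
       | some γ => some γ
       | none => Q.code p) := rfl

lemma unionPair_code {P Q : PartialPair G} {p : Finset G × G} {γ : G}
    (h : (unionPair P Q).code p = some γ) :
    P.code p = some γ ∨ Q.code p = some γ := by
  rw [unionPair_code_eq] at h
  cases h' : P.code p with
  | none => rw [h'] at h; exact Or.inr h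
  | some γ' => rw [h'] at h; exact Or.inl h

lemma unionPair_sub_full {c : Finset G × G → G} {P Q : PartialPair G}
    (hP : P.Sub (fullPair c)) (hQ : Q.Sub (fullPair c)) :
    (unionPair P Q).Sub (fullPair c) := by
  refine ⟨fun x _ => trivial, fun p γ h => ?_⟩
  rcases unionPair_code h with h' | h'
  · exact hP.2 p γ h'
  · exact hQ.2 p γ h'

lemma sub_full_eq {c : Finset G × G → G} {P : PartialPair G}
    (hP : P.Sub (fullPair c)) {p : Finset G × G} {γ : G}
    (h : P.code p = some γ) : γ = c p := by
  have := hP.2 p γ h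
  simpa [fullPair] using this.symm

lemma unionPair_sub_left {c : Finset G × G → G} {P Q : PartialPair G}
    (hP : P.Sub (fullPair c)) (hQ : Q.Sub (fullPair c)) :
    P.Sub (unionPair P Q) := by
  refine ⟨fun x hx => Or.inl hx, fun p γ h => ?_⟩
  rw [unionPair_code_eq, h]

lemma unionPair_sub_right {c : Finset G × G → G} {P Q : PartialPair G}
    (hP : P.Sub (fullPair c)) (hQ : Q.Sub (fullPair c)) :
    Q.Sub (unionPair P Q) := by
  refine ⟨fun x hx => Or.inr hx, fun p γ h => ?_⟩
  rw [unionPair_code_eq]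
  cases h' : P.code p with
  | none => exact h
  | some γ' =>
    have h1 := sub_full_eq hP h'
    have h2 := sub_full_eq hQ h
    simp [h1, ← h2]

open Classical in
noncomputable def onePair (c : Finset G × G → G) (p : Finset G × G) : PartialPair G :=
  ⟨↑p.1 ∪ {p.2, c p}, fun q => if q = p then some (c p) else none⟩

open Classical in
lemma onePair_code_eq (c : Finset G × G → G) (p q : Finset G × G) :
    (onePair c p).code q = if q = p then some (c p) else none := rfl

lemma onePair_finite (c : Finset G × G → G) (p : Finset G × G) :
    (onePair c p).carrier.Finite :=
  (p.1.finite_toSet).union ((Set.finite_singleton _).insert _)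

lemma onePair_sub_full (c : Finset G × G → G) (p : Finset G × G) :
    (onePair c p).Sub (fullPair c) := by
  refine ⟨fun x _ => trivial, fun q γ h => ?_⟩
  rw [onePair_code_eq] at h
  by_cases hq : q = p
  · subst hq; simp at h; simp [fullPair, h]
  · simp [hq] at h

lemma onePair_code (c : Finset G × G → G) (p : Finset G × G) :
    (onePair c p).code p = some (c p) := by
  rw [onePair_code_eq]; simp

end Aux

/-- If `α ∈ M^G_ρ` in a graph model `G`, then there is a **finite** subpair `A` of `G`
with `α ∈ M^A_{ρ ∩ A}`. -/
theorem mem_interp_finite_subpair {G : Type*} [Infinite G]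
    (c : Finset G × G → G) (hc : Function.Injective c)
    (M : Term) (ρ : ℕ → Set G) (α : G)
    (hα : α ∈ (fullPair c).interp M ρ) :
    ∃ A : PartialPair G, A.carrier.Finite ∧ A.Sub (fullPair c) ∧
      α ∈ A.interp M (fun n => ρ n ∩ A.carrier) := by
  classical
  induction M generalizing ρ α with
  | var n =>
    exact ⟨⟨{α}, fun _ => none⟩, Set.finite_singleton α,
      ⟨fun x _ => trivial, fun p γ h => by simp at h⟩, hα, rfl⟩
  | app M N ihM ihN =>
    obtain ⟨-, a, haN, γ, hcode, hγ⟩ := hα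
    have hγeq : γ = c (a, α) := by simpa [fullPair] using hcode.symm
    subst hγeq
    obtain ⟨A₁, hA₁f, hA₁s, hA₁⟩ := ihM ρ _ hγ
    have hcov : ∃ A₂ : PartialPair G, A₂.carrier.Finite ∧ A₂.Sub (fullPair c) ∧
        ↑a ⊆ A₂.interp N (fun n => ρ n ∩ A₂.carrier) := by
      clear hA₁ hcode hγ
      induction a using Finset.induction with
      | empty =>
        exact ⟨⟨∅, fun _ => none⟩, Set.finite_empty,
          ⟨fun x _ => trivial, fun p γ h => by simp at h⟩, by simp⟩
      | @insert β s hβs ih =>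
        have hβ : β ∈ (fullPair c).interp N ρ := haN (by simp)
        obtain ⟨B₁, hB₁f, hB₁s, hB₁⟩ := ihN ρ β hβ
        obtain ⟨B₂, hB₂f, hB₂s, hB₂⟩ := ih (fun x hx => haN (by
          simp only [Finset.coe_insert, Set.mem_insert_iff]; exact Or.inr hx))
        refine ⟨unionPair B₁ B₂, hB₁f.union hB₂f, unionPair_sub_full hB₁s hB₂s, ?_⟩
        intro x hx
        rcases Finset.mem_insert.1 (by exact_mod_cast hx) with h | h
        · subst h
          exact interp_mono (unionPair_sub_left hB₁s hB₂s) N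
            (fun n => Set.inter_subset_inter_right _ (fun y hy => Or.inl hy)) hB₁
        · exact interp_mono (unionPair_sub_right hB₁s hB₂s) N
            (fun n => Set.inter_subset_inter_right _ (fun y hy => Or.inr hy)) (hB₂ h)
    obtain ⟨A₂, hA₂f, hA₂s, hA₂⟩ := hcov
    set O := onePair c (a, α) with hO
    set A := unionPair (unionPair A₁ A₂) O with hA
    have hUs : (unionPair A₁ A₂).Sub (fullPair c) := unionPair_sub_full hA₁s hA₂s
    have hOs : O.Sub (fullPair c) := onePair_sub_full c _
    have hAs : A.Sub (fullPair c) := unionPair_sub_full hUs hOs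
    have hA₁A : A₁.Sub A :=
      sub_trans (unionPair_sub_left hA₁s hA₂s) (unionPair_sub_left hUs hOs)
    have hA₂A : A₂.Sub A :=
      sub_trans (unionPair_sub_right hA₁s hA₂s) (unionPair_sub_left hUs hOs)
    have hOA : O.Sub A := unionPair_sub_right hUs hOs
    refine ⟨A, ((hA₁f.union hA₂f).union (onePair_finite c _)), hAs, ?_, a, ?_, c (a, α), ?_, ?_⟩
    · exact hOA.1 (Or.inr (Or.inl rfl))
    · exact fun x hx => interp_mono hA₂A N
        (fun n => Set.inter_subset_inter_right _ hA₂A.1) (hA₂ hx)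
    · exact hOA.2 _ _ (onePair_code c _)
    · exact interp_mono hA₁A M
        (fun n => Set.inter_subset_inter_right _ hA₁A.1) hA₁
  | lam M ihM =>
    obtain ⟨a, α', hcode, hα'⟩ := hα
    have heq : c (a, α') = α := by simpa [fullPair] using hcode
    obtain ⟨A₁, hA₁f, hA₁s, hA₁⟩ := ihM (consEnv ↑a ρ) α' hα'
    set O := onePair c (a, α') with hO
    set A := unionPair A₁ O with hA
    have hOs : O.Sub (fullPair c) := onePair_sub_full c _
    have hAs : A.Sub (fullPair c) := unionPair_sub_full hA₁s hOs
    have hA₁A : A₁.Sub A := unionPair_sub_left hA₁s hOs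
    have hOA : O.Sub A := unionPair_sub_right hA₁s hOs
    refine ⟨A, hA₁f.union (onePair_finite c _), hAs, a, α', ?_, ?_⟩
    · rw [← heq]; exact hOA.2 _ _ (onePair_code c _)
    · refine interp_mono hA₁A M ?_ hA₁
      intro n
      cases n with
      | zero => exact fun x hx => hx.1
      | succ k => exact Set.inter_subset_inter_right _ hA₁A.1
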